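/- In the Friedrichs model, the domain D(A) is dense in L²(ℝ); for every f in the set D* := {f ∈ L²(ℝ) : ∃ c ∈ ℂ with x ↦ x f(x) − c in L²(ℝ)}, the constant c is unique (denoted c_f); and the Hilbert-space adjoint A* of A has domain exactly D*, acting by (A* f)(x) = x f(x) − c_f + (∫_ℝ f ψ̄)·φ(x). -/

import Mathlib

open MeasureTheory Filter Topology
open scoped InnerProductSpace

noncomputable section

/-- The space `L²(ℝ)` (complex valued). -/
abbrev L2 := Lp ℂ 2 (volume : Measure ℝ)

/-- Membership in the domain of the minimal Friedrichs-model operator `A`: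
`x f(x) ∈ L²` and `lim_{R→∞} ∫_{-R}^R f = 0`. -/
abbrev inDomA (f : L2) : Prop :=
  MemLp (fun x : ℝ => (x : ℂ) * f x) 2 volume ∧
    Tendsto (fun R : ℝ => ∫ x in Set.Ioc (-R) R, f x) atTop (nhds 0)

/-- Membership in the domain of the maximal operator(s): there is a constant `c`
(the trace `Γ₂ f = c_f`) with `x f(x) − c ∈ L²`. -/
abbrev inDomAstar (f : L2) (c : ℂ) : Prop :=
  MemLp (fun x : ℝ => (x : ℂ) * f x - c) 2 volume

/-- The minimal operator `A`: `(A f)(x) = x f(x) + ⟨f, φ⟩ ψ(x)`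
(paper inner product `⟨f, φ⟩ = ⟪φ, f⟫` in Mathlib's convention). -/
def Aop (φ ψ f : L2) (hf : inDomA f) : L2 :=
  MemLp.toLp (fun x : ℝ => (x : ℂ) * f x) hf.1 + ⟪φ, f⟫_ℂ • ψ

/-- The adjoint expression `A*`: `(A* f)(x) = x f(x) − c_f + ⟨f, ψ⟩ φ(x)`. -/
def AstarOp (φ ψ f : L2) (c : ℂ) (h : inDomAstar f c) : L2 :=
  MemLp.toLp (fun x : ℝ => (x : ℂ) * f x - c) h + ⟪ψ, f⟫_ℂ • φ

/-- The expression `Ã*`: `(Ã* f)(x) = x f(x) − c_f + ⟨f, φ⟩ ψ(x)`. -/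
def AtildeStarOp (φ ψ f : L2) (c : ℂ) (h : inDomAstar f c) : L2 :=
  MemLp.toLp (fun x : ℝ => (x : ℂ) * f x - c) h + ⟪φ, f⟫_ℂ • ψ

/-- The operator `Ã`: `(Ã f)(x) = x f(x) + ⟨f, ψ⟩ φ(x)` on `D(A)`. -/
def AtildeOp (φ ψ f : L2) (hf : inDomA f) : L2 :=
  MemLp.toLp (fun x : ℝ => (x : ℂ) * f x) hf.1 + ⟪ψ, f⟫_ℂ • φ

-- local integrability of L2 functions on finite-measure sets
lemma L2loc (g : ℝ → ℂ) (hg : MemLp g 2 volume) {s : Set ℝ} (hs : volume s ≠ ⊤) :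
    IntegrableOn g s volume := by
  haveI : IsFiniteMeasure (volume.restrict s) :=
    ⟨by rwa [Measure.restrict_apply_univ, lt_top_iff_ne_top]⟩
  exact (hg.restrict s).integrable (by norm_num)

-- uniqueness of the constant
lemma unique_c (f : L2) (c c' : ℂ) (h : inDomAstar f c) (h' : inDomAstar f c') : c = c' := by
  have hsub := h'.sub h
  have : MemLp (fun _ : ℝ => c - c') 2 volume := by
    refine (memLp_congr_ae ?_).1 hsub
    filter_upwards with x
    simp only [Pi.sub_apply]
    ring
  rcases (memLp_const_iff (by norm_num) (by norm_num)).1 this with h0 | hfin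
  · exact sub_eq_zero.1 h0
  · simp [Real.volume_univ] at hfin

lemma integrable_conj_mul (u v : ℝ → ℂ) (hu : MemLp u 2 volume) (hv : MemLp v 2 volume) :
    Integrable (fun x => (starRingEnd ℂ) (u x) * v x) volume := by
  have h := L2.integrable_inner (𝕜 := ℂ) (hu.toLp u) (hv.toLp v)
  refine h.congr ?_
  filter_upwards [hu.coeFn_toLp, hv.coeFn_toLp] with x h1 h2
  simp [RCLike.inner_apply, h1, h2, mul_comm]

lemma inner_L2 (u v : L2) : ⟪u, v⟫_ℂ = ∫ x : ℝ, (starRingEnd ℂ) (u x) * v x := by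
  rw [L2.inner_def]
  congr 1
  funext x
  rw [RCLike.inner_apply]
  ring

-- key integral identity
lemma key_identity (g : L2) (c : ℂ) (hg : inDomAstar g c) (f : L2) (hf : inDomA f) :
    ∫ x : ℝ, (starRingEnd ℂ) (g x) * ((x : ℂ) * f x)
      = ∫ x : ℝ, (starRingEnd ℂ) ((x : ℂ) * g x - c) * f x := by
  have h1 : Integrable (fun x : ℝ => (starRingEnd ℂ) (g x) * ((x:ℂ) * f x)) volume :=
    integrable_conj_mul _ _ (Lp.memLp g) hf.1
  have h2 : Integrable (fun x : ℝ => (starRingEnd ℂ) ((x:ℂ) * g x - c) * f x) volume :=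
    integrable_conj_mul _ _ hg (Lp.memLp f)
  have key : ∀ R : ℝ, 0 ≤ R →
      ∫ x in Set.Ioc (-R) R, (starRingEnd ℂ) (g x) * ((x:ℂ) * f x)
        = (∫ x in Set.Ioc (-R) R, (starRingEnd ℂ) ((x:ℂ) * g x - c) * f x)
          + (starRingEnd ℂ) c * ∫ x in Set.Ioc (-R) R, f x := by
    intro R hR
    have hfint : IntegrableOn (fun x : ℝ => (f x : ℂ)) (Set.Ioc (-R) R) volume :=
      L2loc _ (Lp.memLp f) (by simp)
    rw [← MeasureTheory.integral_const_mul, ← integral_add h2.integrableOn (hfint.const_mul _)]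
    refine setIntegral_congr_fun measurableSet_Ioc (fun x _ => ?_)
    simp only [map_mul, map_sub, Complex.conj_ofReal, map_ofNat]
    ring
  have t1 : Tendsto (fun R : ℝ => ∫ x in Set.Ioc (-R) R, (starRingEnd ℂ) (g x) * ((x:ℂ) * f x))
      atTop (𝓝 (∫ x : ℝ, (starRingEnd ℂ) (g x) * ((x:ℂ) * f x))) := by
    refine (intervalIntegral_tendsto_integral h1 tendsto_neg_atTop_atBot tendsto_id).congr' ?_
    filter_upwards [eventually_ge_atTop (0:ℝ)] with R hR
    simp only [id]
    rw [intervalIntegral.integral_of_le (by linarith)]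
  have t2 : Tendsto (fun R : ℝ => ∫ x in Set.Ioc (-R) R, (starRingEnd ℂ) ((x:ℂ) * g x - c) * f x)
      atTop (𝓝 (∫ x : ℝ, (starRingEnd ℂ) ((x:ℂ) * g x - c) * f x)) := by
    refine (intervalIntegral_tendsto_integral h2 tendsto_neg_atTop_atBot tendsto_id).congr' ?_
    filter_upwards [eventually_ge_atTop (0:ℝ)] with R hR
    simp only [id]
    rw [intervalIntegral.integral_of_le (by linarith)]
  have t3 : Tendsto (fun R : ℝ => (∫ x in Set.Ioc (-R) R, (starRingEnd ℂ) ((x:ℂ) * g x - c) * f x)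
          + (starRingEnd ℂ) c * ∫ x in Set.Ioc (-R) R, f x) atTop
      (𝓝 ((∫ x : ℝ, (starRingEnd ℂ) ((x:ℂ) * g x - c) * f x) + (starRingEnd ℂ) c * 0)) :=
    t2.add ((hf.2.const_mul _))
  have t1' : Tendsto (fun R : ℝ => ∫ x in Set.Ioc (-R) R, (starRingEnd ℂ) (g x) * ((x:ℂ) * f x))
      atTop (𝓝 ((∫ x : ℝ, (starRingEnd ℂ) ((x:ℂ) * g x - c) * f x) + (starRingEnd ℂ) c * 0)) := by
    refine t3.congr' ?_
    filter_upwards [eventually_ge_atTop (0:ℝ)] with R hR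
    exact (key R hR).symm
  have := tendsto_nhds_unique t1 t1'
  rwa [mul_zero, add_zero] at this

-- averages constant implies a.e. constant
lemma ae_const_of_setIntegral (u : ℝ → ℂ) (hu : LocallyIntegrable u volume) (k : ℂ)
    (H : ∀ a b : ℝ, a < b → ∫ x in Set.Ioc a b, u x = (b - a) * k) :
    u =ᵐ[volume] fun _ => k := by
  filter_upwards [IsUnifLocDoublingMeasure.ae_tendsto_average (μ := volume) hu 1] with x hx
  have hav : Tendsto (fun r : ℝ => ⨍ y in Metric.closedBall x r, u y) (𝓝[>] 0) (𝓝 (u x)) := by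
    refine hx (fun _ => x) (fun r => r) tendsto_id ?_
    filter_upwards [self_mem_nhdsWithin] with r hr
    simp only [Set.mem_Ioi] at hr
    rw [one_mul]
    exact Metric.mem_closedBall_self hr.le
  have hconst : ∀ᶠ r in 𝓝[>] (0:ℝ), (⨍ y in Metric.closedBall x r, u y) = k := by
    filter_upwards [self_mem_nhdsWithin] with r hr
    simp only [Set.mem_Ioi] at hr
    rw [Real.closedBall_eq_Icc, setAverage_eq, Real.volume_real_Icc_of_le (by linarith),
      integral_Icc_eq_integral_Ioc, H _ _ (by linarith)]
    have h1 : x + r - (x - r) = 2 * r := by ring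
    rw [h1, Complex.real_smul]
    have hrne : (r : ℂ) ≠ 0 := by
      simpa using hr.ne'
    push_cast
    field_simp
    ring
  have : Tendsto (fun r : ℝ => ⨍ y in Metric.closedBall x r, u y) (𝓝[>] 0) (𝓝 k) :=
    Tendsto.congr' (by filter_upwards [hconst] with r h; exact h.symm) tendsto_const_nhds
  exact tendsto_nhds_unique hav this

-- membership in D(A) from compactly supported data
lemma inDomA_of (v : ℝ → ℂ) (hv : MemLp v 2 volume) (N : ℝ)
    (hxv : MemLp (fun x : ℝ => (x : ℂ) * v x) 2 volume)
    (hzero : ∀ R : ℝ, N ≤ R → ∫ x in Set.Ioc (-R) R, v x = 0) :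
    inDomA (hv.toLp v) := by
  constructor
  · refine (memLp_congr_ae ?_).2 hxv
    filter_upwards [hv.coeFn_toLp] with x hx
    rw [hx]
  · have hev : ∀ᶠ R in atTop, (0:ℂ) = ∫ x in Set.Ioc (-R) R, (hv.toLp v) x := by
      filter_upwards [eventually_ge_atTop N] with R hR
      rw [setIntegral_congr_ae measurableSet_Ioc (hv.coeFn_toLp.mono fun x hx _ => hx),
        hzero R hR]
    exact Tendsto.congr' hev tendsto_const_nhds

lemma MeasureTheory.Integrable.conj' {f : ℝ → ℂ} {μ : Measure ℝ} (h : Integrable f μ) :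
    Integrable (fun x => (starRingEnd ℂ) (f x)) μ := by
  refine ⟨RCLike.continuous_conj.comp_aestronglyMeasurable h.1, ?_⟩
  simpa [HasFiniteIntegral] using h.2

def χ (a b : ℝ) : ℝ → ℂ := Set.indicator (Set.Ioc a b) fun _ => (1:ℂ)

lemma memℒp_χ (a b : ℝ) : MemLp (χ a b) 2 volume :=
  memLp_indicator_const 2 measurableSet_Ioc 1 (Or.inr (by simp))

lemma memℒp_x_χ (a b : ℝ) : MemLp (fun x : ℝ => (x:ℂ) * χ a b x) 2 volume := by
  refine MemLp.of_le (g := Set.indicator (Set.Ioc a b) fun _ => ((max |a| |b| : ℝ) : ℂ))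
    (memLp_indicator_const 2 measurableSet_Ioc (((max |a| |b| : ℝ) : ℂ)) (Or.inr (by simp))) ?_ ?_
  · exact (Complex.measurable_ofReal.mul
      (measurable_const.indicator measurableSet_Ioc)).aestronglyMeasurable
  · filter_upwards with x
    by_cases hx : x ∈ Set.Ioc a b
    · simp only [χ, Set.indicator_of_mem hx, mul_one, Complex.norm_real, Real.norm_eq_abs]
      have h1 : |x| ≤ max |a| |b| := abs_le_max_abs_abs hx.1.le hx.2
      have h2 : |(max |a| |b| : ℝ)| = max |a| |b| :=
        abs_of_nonneg (le_trans (abs_nonneg a) (le_max_left _ _))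
      rw [h2]; exact h1
    · simp [χ, Set.indicator_of_notMem hx]

lemma integral_χ {a b : ℝ} (hab : a ≤ b) {R : ℝ} (h1 : -R ≤ a) (h2 : b ≤ R) :
    ∫ x in Set.Ioc (-R) R, χ a b x = ((b - a : ℝ) : ℂ) := by
  rw [χ, setIntegral_indicator measurableSet_Ioc,
    Set.inter_eq_self_of_subset_right (Set.Ioc_subset_Ioc h1 h2),
    setIntegral_const, Real.volume_real_Ioc_of_le (by linarith)]
  simp

lemma inner_toLp_left (w : ℝ → ℂ) (hw : MemLp w 2 volume) (f : L2) :
    ⟪(hw.toLp w : L2), f⟫_ℂ = ∫ x : ℝ, (starRingEnd ℂ) (w x) * f x := by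
  rw [inner_L2]
  refine integral_congr_ae ?_
  filter_upwards [hw.coeFn_toLp] with x hx
  rw [hx]

lemma inner_toLp_right (g : L2) (w : ℝ → ℂ) (hw : MemLp w 2 volume) :
    ⟪g, (hw.toLp w : L2)⟫_ℂ = ∫ x : ℝ, (starRingEnd ℂ) (g x) * w x := by
  rw [inner_L2]
  refine integral_congr_ae ?_
  filter_upwards [hw.coeFn_toLp] with x hx
  rw [hx]

lemma dense_domA : Dense {f : L2 | inDomA f} := by
  rw [Metric.dense_iff]
  intro f r hr
  obtain ⟨g₀, g₀supp, hgε, g₀cont, g₀mem⟩ :=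
    (Lp.memLp f).exists_hasCompactSupport_eLpNorm_sub_le (p := 2) (by norm_num)
      (ε := ENNReal.ofReal (r/4)) (ENNReal.ofReal_pos.2 (by linarith)).ne'
  obtain ⟨N, hN⟩ := g₀supp.isBounded.subset_closedBall 0
  set I : ℂ := ∫ x : ℝ, g₀ x with hI
  have hg₀int : Integrable g₀ volume := g₀cont.integrable_of_hasCompactSupport g₀supp
  set L : ℝ := max (max (N + 1) 1) ((4 * ‖I‖ / r)^2 + 1) with hL
  have hL1 : (1:ℝ) ≤ L := le_trans (le_max_right _ _) (le_max_left _ _)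
  have hL0 : (0:ℝ) < L := by linarith
  have hLN : N + 1 ≤ L := le_trans (le_max_left _ _) (le_max_left _ _)
  have hLsq : (4 * ‖I‖ / r)^2 < L := by
    have := le_max_right (max (N + 1) 1) ((4 * ‖I‖ / r)^2 + 1)
    linarith
  set v : ℝ → ℂ := fun x => g₀ x - (I/L) * χ 0 L x with hv
  have hvmem : MemLp v 2 volume := g₀mem.sub ((memℒp_χ 0 L).const_mul _)
  have hxg₀ : MemLp (fun x : ℝ => (x:ℂ) * g₀ x) 2 volume := by
    have hcont : Continuous fun x : ℝ => (x:ℂ) * g₀ x :=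
      Complex.continuous_ofReal.mul g₀cont
    have hsupp : HasCompactSupport fun x : ℝ => (x:ℂ) * g₀ x :=
      HasCompactSupport.mul_left g₀supp
    exact hcont.memLp_of_hasCompactSupport hsupp
  have hxv : MemLp (fun x : ℝ => (x:ℂ) * v x) 2 volume := by
    have hfe : (fun x : ℝ => (x:ℂ) * v x)
        = fun x : ℝ => ((x:ℂ) * g₀ x) - (I/L) * ((x:ℂ) * χ 0 L x) := by
      funext x; simp only [hv]; ring
    rw [hfe]
    exact hxg₀.sub ((memℒp_x_χ 0 L).const_mul _)
  have hg₀zero : ∀ x : ℝ, x ∉ Set.Ioc (-(N+1)) (N+1) → g₀ x = 0 := by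
    intro x hx
    refine image_eq_zero_of_notMem_tsupport fun hmem => hx ?_
    have := hN hmem
    simp only [Metric.mem_closedBall, Real.dist_eq, sub_zero] at this
    constructor
    · linarith [neg_abs_le x]
    · linarith [le_abs_self x]
  have hzero : ∀ R : ℝ, L ≤ R → ∫ x in Set.Ioc (-R) R, v x = 0 := by
    intro R hR
    have i1 : IntegrableOn g₀ (Set.Ioc (-R) R) volume := hg₀int.integrableOn
    have i2 : IntegrableOn (fun x => (I/L) * χ 0 L x) (Set.Ioc (-R) R) volume :=
      (L2loc _ (memℒp_χ 0 L) (by simp)).const_mul _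
    have e1 : ∫ x in Set.Ioc (-R) R, g₀ x = I := by
      rw [hI]
      refine setIntegral_eq_integral_of_forall_compl_eq_zero fun x hx => ?_
      refine hg₀zero x fun hmem => hx ?_
      exact ⟨by have := hmem.1; linarith, le_trans hmem.2 (by linarith)⟩
    rw [hv, integral_sub i1 i2, MeasureTheory.integral_const_mul, e1,
      integral_χ hL0.le (by linarith) hR]
    have : (L:ℂ) ≠ 0 := by
      simpa using (by linarith : L ≠ 0)
    field_simp
    simp
  have hG : inDomA (hvmem.toLp v) := inDomA_of v hvmem L hxv hzero
  refine ⟨hvmem.toLp v, ?_, hG⟩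
  rw [Metric.mem_ball, dist_eq_norm]
  have key1 : ‖hvmem.toLp v - MemLp.toLp g₀ g₀mem‖ ≤ ‖I‖ / Real.sqrt L := by
    rw [← MemLp.toLp_sub, Lp.norm_toLp]
    have hfe : v - g₀ = Set.indicator (Set.Ioc 0 L) fun _ => -(I/L) := by
      funext x
      simp only [Pi.sub_apply, hv, χ]
      by_cases hx : x ∈ Set.Ioc 0 L <;>
        simp [Set.indicator_of_mem, Set.indicator_of_notMem, hx]
    rw [hfe, eLpNorm_indicator_const measurableSet_Ioc (by norm_num) (by norm_num)]
    rw [Real.volume_Ioc, ENNReal.toReal_mul, ← ENNReal.toReal_rpow]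
    have h1 : (‖(-(I/(L:ℂ)) : ℂ)‖ₑ).toReal = ‖I‖ / L := by
      simp [map_div₀, abs_of_pos hL0]
    rw [h1, ENNReal.toReal_ofReal (by linarith : (0:ℝ) ≤ L - 0)]
    have h2 : (L - 0) ^ (1 / ((2:ENNReal)).toReal) = Real.sqrt L := by
      rw [sub_zero, Real.sqrt_eq_rpow]
      norm_num
    rw [h2]
    have hs : Real.sqrt L * Real.sqrt L = L := Real.mul_self_sqrt hL0.le
    have hs0 : 0 < Real.sqrt L := Real.sqrt_pos.2 hL0
    have heq : ‖I‖ / L * Real.sqrt L = ‖I‖ / Real.sqrt L := by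
      rw [← hs]
      field_simp
      rw [Real.sqrt_sq hs0.le]
    exact le_of_eq heq
  have key2 : ‖MemLp.toLp g₀ g₀mem - f‖ ≤ r / 4 := by
    rw [norm_sub_rev, Lp.norm_def]
    have hae : (⇑(f - MemLp.toLp g₀ g₀mem) : ℝ → ℂ) =ᵐ[volume] ⇑f - g₀ := by
      filter_upwards [Lp.coeFn_sub f (MemLp.toLp g₀ g₀mem), g₀mem.coeFn_toLp] with x hx hx2
      rw [hx, Pi.sub_apply, hx2, Pi.sub_apply]
    rw [eLpNorm_congr_ae hae]
    calc (eLpNorm (⇑f - g₀) 2 volume).toReal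
        ≤ (ENNReal.ofReal (r/4)).toReal := ENNReal.toReal_mono ENNReal.ofReal_ne_top hgε
      _ = r/4 := ENNReal.toReal_ofReal (by linarith)
  have hs0 : 0 < Real.sqrt L := Real.sqrt_pos.2 hL0
  have key3 : ‖I‖ / Real.sqrt L < r / 4 := by
    have hsqrt : 4 * ‖I‖ / r < Real.sqrt L := by
      have h1 : Real.sqrt ((4 * ‖I‖ / r)^2) < Real.sqrt L :=
        Real.sqrt_lt_sqrt (sq_nonneg _) hLsq
      rwa [Real.sqrt_sq (by positivity)] at h1
    rw [div_lt_iff₀ hs0]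
    have hI4 : (r/4) * (4 * ‖I‖ / r) = ‖I‖ := by
      field_simp
    nlinarith [mul_lt_mul_of_pos_left hsqrt (by linarith : (0:ℝ) < r/4)]
  calc ‖hvmem.toLp v - f‖
      ≤ ‖hvmem.toLp v - MemLp.toLp g₀ g₀mem‖ + ‖MemLp.toLp g₀ g₀mem - f‖ :=
        norm_sub_le_norm_sub_add_norm_sub _ _ _
    _ < r := by linarith

-- the fundamental adjoint identity
lemma adj_identity (φ ψ g : L2) (c : ℂ) (hc : inDomAstar g c) (f : L2) (hf : inDomA f) :
    ⟪g, Aop φ ψ f hf⟫_ℂ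
      = ⟪(MemLp.toLp (fun x : ℝ => (x : ℂ) * g x - c) hc + ⟪ψ, g⟫_ℂ • φ : L2), f⟫_ℂ := by
  rw [Aop, inner_add_right, inner_smul_right, inner_add_left, inner_smul_left, inner_conj_symm]
  have e1 : ⟪g, (MemLp.toLp _ hf.1 : L2)⟫_ℂ
      = ∫ x : ℝ, (starRingEnd ℂ) (g x) * ((x:ℂ) * f x) := inner_toLp_right g _ hf.1
  have e2 : ⟪(MemLp.toLp _ hc : L2), f⟫_ℂ
      = ∫ x : ℝ, (starRingEnd ℂ) ((x:ℂ) * g x - c) * f x := inner_toLp_left _ hc f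
  rw [e1, e2, key_identity g c hc f hf]
  ring

/-- In the Friedrichs model: `D(A)` is dense in `L²(ℝ)`; the constant
`c_f` is unique; and the Hilbert-space adjoint of `A` has domain exactly
`D* = {f : ∃ c, x f(x) − c ∈ L²}`, acting by `(A* f)(x) = x f(x) − c_f + ⟨f, ψ⟩ φ(x)`.
(The adjoint is expressed extensionally: `g ∈ D(A*)` iff there is `h ∈ L²` with
`⟨A f, g⟩ = ⟨f, h⟩` for all `f ∈ D(A)`, and then `h` is given by the stated formula;
paper inner products `⟨u, v⟩` are `⟪v, u⟫_ℂ` in Mathlib's convention.) -/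
theorem statement_15 (φ ψ : L2) :
    Dense {f : L2 | inDomA f}
    ∧ (∀ (f : L2) (c c' : ℂ), inDomAstar f c → inDomAstar f c' → c = c')
    ∧ (∀ g : L2,
        (∃ h : L2, ∀ (f : L2) (hf : inDomA f), ⟪g, Aop φ ψ f hf⟫_ℂ = ⟪h, f⟫_ℂ)
          ↔ ∃ c : ℂ, inDomAstar g c)
    ∧ (∀ (g : L2) (c : ℂ) (hc : inDomAstar g c) (h : L2),
        (∀ (f : L2) (hf : inDomA f), ⟪g, Aop φ ψ f hf⟫_ℂ = ⟪h, f⟫_ℂ)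
          → h = MemLp.toLp (fun x : ℝ => (x : ℂ) * g x - c) hc + ⟪ψ, g⟫_ℂ • φ) := by
  have fwd : ∀ (g h : L2), (∀ (f : L2) (hf : inDomA f), ⟪g, Aop φ ψ f hf⟫_ℂ = ⟪h, f⟫_ℂ) →
      ∃ c : ℂ, inDomAstar g c := by
    intro g h Hh
    set h' : L2 := h - ⟪ψ, g⟫_ℂ • φ with hh'
    set u : ℝ → ℂ := fun x => (x:ℂ) * g x - h' x with hu
    -- u is locally integrable
    have hu_loc : LocallyIntegrable u volume := by
      rw [locallyIntegrable_iff]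
      intro K hK
      obtain ⟨M, hM⟩ := hK.isBounded.subset_closedBall 0
      have hgK : IntegrableOn (fun x : ℝ => (g x : ℂ)) K volume :=
        L2loc _ (Lp.memLp g) hK.measure_lt_top.ne
      have hh'K : IntegrableOn (fun x : ℝ => (h' x : ℂ)) K volume :=
        L2loc _ (Lp.memLp h') hK.measure_lt_top.ne
      refine Integrable.sub ?_ hh'K
      refine Integrable.mono' (hgK.norm.const_mul M) ?_ ?_
      · exact (Complex.measurable_ofReal.aemeasurable.aestronglyMeasurable.mul
          (Lp.aestronglyMeasurable g).restrict)
      · rw [ae_restrict_iff' hK.measurableSet]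
        filter_upwards with x hx
        have : |x| ≤ M := by simpa [Real.dist_eq] using hM hx
        rw [norm_mul, Complex.norm_real, Real.norm_eq_abs]
        exact mul_le_mul_of_nonneg_right this (norm_nonneg _)
    -- the set-integral relation
    have Hab : ∀ a b : ℝ, a < b →
        ∫ x in Set.Ioc a b, u x = ((b:ℂ) - (a:ℂ)) * ∫ x in Set.Ioc 0 1, u x := by
      intro a b hab
      set v : ℝ → ℂ := fun x => χ a b x - ((b:ℂ) - a) * χ 0 1 x with hv
      have hvmem : MemLp v 2 volume := (memℒp_χ a b).sub ((memℒp_χ 0 1).const_mul _)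
      have hxv : MemLp (fun x : ℝ => (x:ℂ) * v x) 2 volume := by
        have hfe : (fun x : ℝ => (x:ℂ) * v x)
            = fun x : ℝ => ((x:ℂ) * χ a b x) - ((b:ℂ) - a) * ((x:ℂ) * χ 0 1 x) := by
          funext x; simp only [hv]; ring
        rw [hfe]
        exact (memℒp_x_χ a b).sub ((memℒp_x_χ 0 1).const_mul _)
      have hzero : ∀ R : ℝ, max (max |a| |b|) 1 ≤ R → ∫ x in Set.Ioc (-R) R, v x = 0 := by
        intro R hR
        have hRa : -R ≤ a := by
          have h1 : |a| ≤ R := le_trans (le_trans (le_max_left _ _) (le_max_left _ _)) hR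
          linarith [neg_abs_le a]
        have hRb : b ≤ R := le_trans (le_abs_self b)
          (le_trans (le_trans (le_max_right _ _) (le_max_left _ _)) hR)
        have hR1 : (1:ℝ) ≤ R := le_trans (le_max_right _ _) hR
        have i1 : IntegrableOn (χ a b) (Set.Ioc (-R) R) volume :=
          L2loc _ (memℒp_χ a b) (by simp)
        have i2 : IntegrableOn (fun x => ((b:ℂ) - a) * χ 0 1 x) (Set.Ioc (-R) R) volume :=
          (L2loc _ (memℒp_χ 0 1) (by simp)).const_mul _
        rw [hv, integral_sub i1 i2, MeasureTheory.integral_const_mul,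
          integral_χ hab.le hRa hRb, integral_χ (by norm_num) (by linarith) hR1]
        push_cast
        ring
      have hf : inDomA (hvmem.toLp v) := inDomA_of v hvmem _ hxv hzero
      have h1 := Hh (hvmem.toLp v) hf
      have e1 : ⟪g, (MemLp.toLp _ hf.1 : L2)⟫_ℂ
          = ∫ x : ℝ, (starRingEnd ℂ) (g x) * ((x:ℂ) * v x) := by
        rw [inner_toLp_right g _ hf.1]
        refine integral_congr_ae ?_
        filter_upwards [hvmem.coeFn_toLp] with x hx
        rw [hx]
      have e2 : ⟪h', (hvmem.toLp v : L2)⟫_ℂ = ∫ x : ℝ, (starRingEnd ℂ) (h' x) * v x :=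
        inner_toLp_right h' v hvmem
      have e3 : ⟪h', (hvmem.toLp v : L2)⟫_ℂ
          = ⟪h, (hvmem.toLp v : L2)⟫_ℂ - ⟪g, ψ⟫_ℂ * ⟪φ, (hvmem.toLp v : L2)⟫_ℂ := by
        rw [hh', inner_sub_left, inner_smul_left, inner_conj_symm]
      have main : ∫ x : ℝ, (starRingEnd ℂ) (g x) * ((x:ℂ) * v x)
          = ∫ x : ℝ, (starRingEnd ℂ) (h' x) * v x := by
        rw [← e1, ← e2, e3, ← h1, Aop, inner_add_right, inner_smul_right]
        ring
      have iA : Integrable (fun x : ℝ => (starRingEnd ℂ) (g x) * ((x:ℂ) * v x)) volume :=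
        integrable_conj_mul _ _ (Lp.memLp g) hxv
      have iB : Integrable (fun x : ℝ => (starRingEnd ℂ) (h' x) * v x) volume :=
        integrable_conj_mul _ _ (Lp.memLp h') hvmem
      have izero : ∫ x : ℝ, (starRingEnd ℂ) (u x) * v x = 0 := by
        have hfe : (fun x : ℝ => (starRingEnd ℂ) (u x) * v x)
            = fun x => (starRingEnd ℂ) (g x) * ((x:ℂ) * v x)
              - (starRingEnd ℂ) (h' x) * v x := by
          funext x
          simp only [hu, map_sub, map_mul, Complex.conj_ofReal]
          ring
        rw [hfe, integral_sub iA iB, main, sub_self]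
      have iu : ∀ p q : ℝ, IntegrableOn (fun x => (starRingEnd ℂ) (u x)) (Set.Ioc p q) volume := by
        intro p q
        exact ((hu_loc.integrableOn_isCompact isCompact_Icc).mono_set
          Set.Ioc_subset_Icc_self).conj'
      have split : ∫ x : ℝ, (starRingEnd ℂ) (u x) * v x
          = (∫ x in Set.Ioc a b, (starRingEnd ℂ) (u x))
            - ((b:ℂ) - a) * ∫ x in Set.Ioc 0 1, (starRingEnd ℂ) (u x) := by
        have hfe : (fun x : ℝ => (starRingEnd ℂ) (u x) * v x)
            = fun x => Set.indicator (Set.Ioc a b) (fun y => (starRingEnd ℂ) (u y)) x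
              - ((b:ℂ) - a) * Set.indicator (Set.Ioc 0 1) (fun y => (starRingEnd ℂ) (u y)) x := by
          funext x
          simp only [hv, χ]
          by_cases hx1 : x ∈ Set.Ioc a b <;> by_cases hx2 : x ∈ Set.Ioc 0 1 <;>
            simp [Set.indicator_of_mem, Set.indicator_of_notMem, hx1, hx2] <;> ring
        rw [hfe, integral_sub ((integrable_indicator_iff measurableSet_Ioc).2 (iu a b))
            (((integrable_indicator_iff measurableSet_Ioc).2 (iu 0 1)).const_mul _),
          MeasureTheory.integral_const_mul, integral_indicator measurableSet_Ioc,
          integral_indicator measurableSet_Ioc]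
      have hkey : (∫ x in Set.Ioc a b, (starRingEnd ℂ) (u x))
          = ((b:ℂ) - a) * ∫ x in Set.Ioc 0 1, (starRingEnd ℂ) (u x) := by
        have h0 := izero
        rw [split] at h0
        exact sub_eq_zero.1 h0
      have hconj : ∀ p q : ℝ, ∫ x in Set.Ioc p q, u x
          = (starRingEnd ℂ) (∫ x in Set.Ioc p q, (starRingEnd ℂ) (u x)) := by
        intro p q
        rw [integral_conj]
        simp
      rw [hconj a b, hkey, map_mul, ← hconj 0 1, map_sub, Complex.conj_ofReal,
        Complex.conj_ofReal]
    have hae := ae_const_of_setIntegral u hu_loc (∫ x in Set.Ioc 0 1, u x) Hab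
    refine ⟨∫ x in Set.Ioc 0 1, u x, ?_⟩
    refine (memLp_congr_ae ?_).2 (Lp.memLp h')
    filter_upwards [hae] with x hx
    have : (x:ℂ) * g x - h' x = ∫ x in Set.Ioc 0 1, u x := hx
    rw [show (x:ℂ) * g x - ∫ x in Set.Ioc 0 1, u x = h' x by rw [← this]; ring]
  have part4 : ∀ (g : L2) (c : ℂ) (hc : inDomAstar g c) (h : L2),
      (∀ (f : L2) (hf : inDomA f), ⟪g, Aop φ ψ f hf⟫_ℂ = ⟪h, f⟫_ℂ)
        → h = MemLp.toLp (fun x : ℝ => (x : ℂ) * g x - c) hc + ⟪ψ, g⟫_ℂ • φ := by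
    intro g c hc h Hh
    set h₀ : L2 := MemLp.toLp (fun x : ℝ => (x : ℂ) * g x - c) hc + ⟪ψ, g⟫_ℂ • φ with hh₀
    have key : (fun f : L2 => ⟪h - h₀, f⟫_ℂ) = fun _ => 0 := by
      refine Continuous.ext_on dense_domA (continuous_const.inner continuous_id)
        continuous_const ?_
      intro f hf
      have h1 := Hh f hf
      have h2 := adj_identity φ ψ g c hc f hf
      simp only [inner_sub_left]
      rw [← h1, h2, sub_self]
    have := congrFun key (h - h₀)
    rw [inner_self_eq_zero, sub_eq_zero] at this
    exact this
  refine ⟨dense_domA, fun f c c' h h' => unique_c f c c' h h', fun g => ⟨fun ⟨h, Hh⟩ => fwd g h Hh,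
    fun ⟨c, hc⟩ => ⟨MemLp.toLp _ hc + ⟪ψ, g⟫_ℂ • φ, fun f hf => adj_identity φ ψ g c hc f hf⟩⟩,
    part4⟩
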